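/- Let n ≥ 1, let k be an integer with 0 < k < n, let x ∈ ℝⁿ, and let τ > 0. A point y ∈ (0,1)ⁿ with Σᵢ yᵢ = k is the minimizer of −xᵀy − τ·H_b(y) over {y ∈ ℝⁿ : 0 < yᵢ < 1, Σᵢ yᵢ = k} if and only if there exists ν ∈ ℝ such that yᵢ = σ((xᵢ + ν)/τ) for every i, where σ is the sigmoid function. -/

import Mathlib

open Finset

/-- The binary entropy function `H_b(y) = -∑ i, [y i log (y i) + (1 - y i) log (1 - y i)]`. -/
noncomputable def binEntropy {n : ℕ} (y : Fin n → ℝ) : ℝ :=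
  -(∑ i, (y i * Real.log (y i) + (1 - y i) * Real.log (1 - y i)))

/-- The sigmoid function `σ(t) = 1 / (1 + exp (-t))`. -/
noncomputable def sigmoid (t : ℝ) : ℝ := 1 / (1 + Real.exp (-t))


lemma sigmoid_mem (u : ℝ) : sigmoid u ∈ Set.Ioo (0:ℝ) 1 := by
  have h := Real.exp_pos (-u)
  constructor
  · unfold sigmoid; positivity
  · unfold sigmoid
    rw [div_lt_one (by positivity)]
    linarith

lemma one_sub_sigmoid (u : ℝ) : 1 - sigmoid u = Real.exp (-u) / (1 + Real.exp (-u)) := by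
  have h : (1:ℝ) + Real.exp (-u) ≠ 0 := by positivity
  unfold sigmoid; field_simp; ring

lemma logit_sigmoid (u : ℝ) : Real.log (sigmoid u) - Real.log (1 - sigmoid u) = u := by
  have h : (0:ℝ) < 1 + Real.exp (-u) := by positivity
  rw [one_sub_sigmoid, sigmoid, Real.log_div one_ne_zero h.ne',
    Real.log_div (Real.exp_ne_zero _) h.ne', Real.log_one, Real.log_exp]
  ring

lemma sigmoid_le_exp (u : ℝ) : sigmoid u ≤ Real.exp u := by
  have hm : Real.exp u * Real.exp (-u) = 1 := by rw [← Real.exp_add]; simp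
  rw [sigmoid, div_le_iff₀ (by positivity)]
  nlinarith [Real.exp_pos u]

lemma one_sub_sigmoid_le (u : ℝ) : 1 - sigmoid u ≤ Real.exp (-u) := by
  rw [one_sub_sigmoid]
  exact div_le_self (Real.exp_pos _).le (by nlinarith [Real.exp_pos (-u)])

lemma Dineq {s t : ℝ} (hs : s ∈ Set.Ioo (0:ℝ) 1) (ht : t ∈ Set.Ioo (0:ℝ) 1) :
    s * Real.log s + (1-s) * Real.log (1-s) + (Real.log s - Real.log (1-s)) * (t - s)
      ≤ t * Real.log t + (1-t) * Real.log (1-t) := by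
  have h1 : Real.log s - Real.log t ≤ s/t - 1 := by
    rw [← Real.log_div hs.1.ne' ht.1.ne']
    exact Real.log_le_sub_one_of_pos (div_pos hs.1 ht.1)
  have h2 : Real.log (1-s) - Real.log (1-t) ≤ (1-s)/(1-t) - 1 := by
    rw [← Real.log_div (by linarith [hs.2] : (1:ℝ) - s ≠ 0)
      (by linarith [ht.2] : (1:ℝ) - t ≠ 0)]
    exact Real.log_le_sub_one_of_pos
      (div_pos (by linarith [hs.2]) (by linarith [ht.2]))
  have A : t * (Real.log s - Real.log t) ≤ s - t := by
    have := mul_le_mul_of_nonneg_left h1 ht.1.le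
    have ht' : t ≠ 0 := ht.1.ne'
    calc t * (Real.log s - Real.log t) ≤ t * (s/t - 1) := this
      _ = s - t := by field_simp
  have B : (1-t) * (Real.log (1-s) - Real.log (1-t)) ≤ t - s := by
    have h1t : (0:ℝ) < 1 - t := by linarith [ht.2]
    have := mul_le_mul_of_nonneg_left h2 h1t.le
    calc (1-t) * (Real.log (1-s) - Real.log (1-t)) ≤ (1-t) * ((1-s)/(1-t) - 1) := this
      _ = t - s := by field_simp; ring
  nlinarith [A, B]

lemma Dineq_strict {s t : ℝ} (hs : s ∈ Set.Ioo (0:ℝ) 1) (ht : t ∈ Set.Ioo (0:ℝ) 1)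
    (hne : s ≠ t) :
    s * Real.log s + (1-s) * Real.log (1-s) + (Real.log s - Real.log (1-s)) * (t - s)
      < t * Real.log t + (1-t) * Real.log (1-t) := by
  have h1 : Real.log s - Real.log t < s/t - 1 := by
    rw [← Real.log_div hs.1.ne' ht.1.ne']
    refine Real.log_lt_sub_one_of_pos (div_pos hs.1 ht.1) ?_
    intro h
    rw [div_eq_iff ht.1.ne', one_mul] at h
    exact hne h
  have h2 : Real.log (1-s) - Real.log (1-t) ≤ (1-s)/(1-t) - 1 := by
    rw [← Real.log_div (by linarith [hs.2] : (1:ℝ) - s ≠ 0)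
      (by linarith [ht.2] : (1:ℝ) - t ≠ 0)]
    exact Real.log_le_sub_one_of_pos
      (div_pos (by linarith [hs.2]) (by linarith [ht.2]))
  have A : t * (Real.log s - Real.log t) < s - t := by
    have := mul_lt_mul_of_pos_left h1 ht.1
    have ht' : t ≠ 0 := ht.1.ne'
    calc t * (Real.log s - Real.log t) < t * (s/t - 1) := this
      _ = s - t := by field_simp
  have B : (1-t) * (Real.log (1-s) - Real.log (1-t)) ≤ t - s := by
    have h1t : (0:ℝ) < 1 - t := by linarith [ht.2]
    have := mul_le_mul_of_nonneg_left h2 h1t.le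
    calc (1-t) * (Real.log (1-s) - Real.log (1-t)) ≤ (1-t) * ((1-s)/(1-t) - 1) := this
      _ = t - s := by field_simp; ring
  nlinarith [A, B]

lemma F_eq {n : ℕ} (x : Fin n → ℝ) (τ : ℝ) (w : Fin n → ℝ) :
    -(∑ i, x i * w i) - τ * binEntropy w
      = ∑ i, (τ * (w i * Real.log (w i) + (1 - w i) * Real.log (1 - w i)) - x i * w i) := by
  rw [binEntropy, Finset.sum_sub_distrib, mul_neg, Finset.mul_sum]
  ring

lemma sigmoid_min {n : ℕ} (x : Fin n → ℝ) {τ : ℝ} (hτ : 0 < τ) (ν : ℝ)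
    (y z : Fin n → ℝ) (hy : ∀ i, y i = sigmoid ((x i + ν) / τ))
    (hz : ∀ i, z i ∈ Set.Ioo (0:ℝ) 1) (hs : ∑ i, z i = ∑ i, y i) :
    -(∑ i, x i * y i) - τ * binEntropy y ≤ -(∑ i, x i * z i) - τ * binEntropy z := by
  have key : ∀ i, (τ * (y i * Real.log (y i) + (1 - y i) * Real.log (1 - y i)) - x i * y i)
      + ν * (z i - y i)
      ≤ τ * (z i * Real.log (z i) + (1 - z i) * Real.log (1 - z i)) - x i * z i := by
    intro i
    have hmem : y i ∈ Set.Ioo (0:ℝ) 1 := by rw [hy i]; exact sigmoid_mem _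
    have hL : τ * (Real.log (y i) - Real.log (1 - y i)) = x i + ν := by
      rw [hy i, logit_sigmoid]; field_simp
    have hD := Dineq hmem (hz i)
    have h2 := mul_le_mul_of_nonneg_left hD hτ.le
    have h3 : τ * ((Real.log (y i) - Real.log (1 - y i)) * (z i - y i))
        = (x i + ν) * (z i - y i) := by rw [← mul_assoc, hL]
    nlinarith [h2, h3]
  have h := Finset.sum_le_sum (s := Finset.univ) (fun i _ => key i)
  rw [Finset.sum_add_distrib] at h
  have hsum0 : ∑ i, (ν * (z i - y i)) = 0 := by
    rw [← Finset.mul_sum, Finset.sum_sub_distrib, hs]; ring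
  rw [F_eq, F_eq]
  linarith [h, hsum0]

/-- First-order characterization of the temperature-scaled LML projection: a point
`y ∈ (0,1)ⁿ` with `∑ᵢ yᵢ = k` minimizes `-⟪x,y⟫ - τ·H_b(y)` over
`{y : 0 < yᵢ < 1, ∑ᵢ yᵢ = k}` if and only if there is a multiplier `ν ∈ ℝ` with
`yᵢ = σ((xᵢ + ν)/τ)` for all `i`. -/
theorem lml_minimizer_iff_sigmoid (n k : ℕ) (hn : 1 ≤ n) (hk0 : 0 < k) (hkn : k < n)
    (x : Fin n → ℝ) (τ : ℝ) (hτ : 0 < τ)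
    (y : Fin n → ℝ) (hy : ∀ i, y i ∈ Set.Ioo (0 : ℝ) 1) (hsum : (∑ i, y i) = k) :
    (∀ z : Fin n → ℝ, (∀ i, z i ∈ Set.Ioo (0 : ℝ) 1) → (∑ i, z i) = k →
      -(∑ i, x i * y i) - τ * binEntropy y ≤ -(∑ i, x i * z i) - τ * binEntropy z) ↔
    (∃ ν : ℝ, ∀ i, y i = sigmoid ((x i + ν) / τ)) := by
  have hn' : (0:ℝ) < n := by exact_mod_cast Nat.pos_of_ne_zero (by omega)
  have hk' : (0:ℝ) < k := by exact_mod_cast hk0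
  have hnk : (k:ℝ) < n := by exact_mod_cast hkn
  constructor
  · -- minimizer → sigmoid form
    intro h
    -- upper/lower bounds on x
    set M : ℝ := ∑ j, |x j| with hM
    have hub : ∀ i, x i ≤ M := fun i =>
      (le_abs_self _).trans (Finset.single_le_sum (f := fun j => |x j|)
        (fun j _ => abs_nonneg _) (Finset.mem_univ i))
    have hlb : ∀ i, -M ≤ x i := fun i => by
      have h1 : |x i| ≤ M := Finset.single_le_sum (f := fun j => |x j|)
        (fun j _ => abs_nonneg _) (Finset.mem_univ i)
      have := neg_abs_le (x i); linarith
    set S : ℝ → ℝ := fun ν => ∑ i, sigmoid ((x i + ν) / τ) with hS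
    have hc0 : Continuous sigmoid := by
      unfold sigmoid
      exact continuous_const.div
        (continuous_const.add (Real.continuous_exp.comp continuous_neg))
        (fun t => by positivity)
    have hcont : Continuous S := by
      apply continuous_finset_sum
      intro i _
      exact hc0.comp (by fun_prop)
    set a : ℝ := τ * Real.log ((k:ℝ)/(2*n)) - M with ha
    set b : ℝ := τ * Real.log ((2*n)/((n:ℝ)-k)) + M with hb
    have hSa : S a ≤ (k:ℝ) := by
      have hbound : ∀ i : Fin n, sigmoid ((x i + a)/τ) ≤ (k:ℝ)/(2*n) := by
        intro i
        refine (sigmoid_le_exp _).trans ?_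
        rw [← Real.exp_log (show (0:ℝ) < (k:ℝ)/(2*n) by positivity)]
        apply Real.exp_le_exp.mpr
        rw [div_le_iff₀ hτ]
        have := hub i
        rw [ha]; linarith
      calc S a ≤ ∑ _i : Fin n, (k:ℝ)/(2*n) :=
            Finset.sum_le_sum (s := Finset.univ) fun i _ => hbound i
        _ = n * ((k:ℝ)/(2*n)) := by
            rw [Finset.sum_const, Finset.card_univ, Fintype.card_fin, nsmul_eq_mul]
        _ ≤ k := by
            have he : (n:ℝ) * ((k:ℝ)/(2*n)) = k/2 := by field_simp
            rw [he]; linarith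
    have hSb : (k:ℝ) ≤ S b := by
      have hbound : ∀ i : Fin n, 1 - ((n:ℝ)-k)/(2*n) ≤ sigmoid ((x i + b)/τ) := by
        intro i
        have h1 : 1 - sigmoid ((x i + b)/τ) ≤ ((n:ℝ)-k)/(2*n) := by
          refine (one_sub_sigmoid_le _).trans ?_
          have hc : (0:ℝ) < (2*n)/((n:ℝ)-k) := by
            apply div_pos (by positivity) (by linarith)
          have he : Real.exp (-(Real.log ((2*n)/((n:ℝ)-k)))) = ((n:ℝ)-k)/(2*n) := by
            rw [Real.exp_neg, Real.exp_log hc, inv_div]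
          rw [← he]
          apply Real.exp_le_exp.mpr
          rw [neg_le_neg_iff, le_div_iff₀ hτ]
          have := hlb i
          rw [hb]; linarith
        linarith
      calc (k:ℝ) ≤ ∑ _i : Fin n, (1 - ((n:ℝ)-k)/(2*n)) := by
            rw [Finset.sum_const, Finset.card_univ, Fintype.card_fin, nsmul_eq_mul]
            have he : (n:ℝ) * (1 - ((n:ℝ)-k)/(2*n)) = ((n:ℝ)+k)/2 := by
              field_simp; ring
            rw [he]; linarith
        _ ≤ S b := Finset.sum_le_sum (s := Finset.univ) fun i _ => hbound i
    have hkmem : (k:ℝ) ∈ Set.uIcc (S a) (S b) := Set.mem_uIcc.mpr (Or.inl ⟨hSa, hSb⟩)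
    obtain ⟨ν, -, hν⟩ := intermediate_value_uIcc hcont.continuousOn hkmem
    refine ⟨ν, ?_⟩
    -- y* is the sigmoid point; show y = y* pointwise
    set w : Fin n → ℝ := fun i => sigmoid ((x i + ν) / τ) with hw
    have hwmem : ∀ i, w i ∈ Set.Ioo (0:ℝ) 1 := fun i => sigmoid_mem _
    have hwsum : ∑ i, w i = (k:ℝ) := hν
    by_contra hne
    push_neg at hne
    obtain ⟨i0, hi0⟩ := hne
    set z : Fin n → ℝ := fun i => (y i + w i)/2 with hz
    have hzmem : ∀ i, z i ∈ Set.Ioo (0:ℝ) 1 := by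
      intro i
      obtain ⟨h1, h2⟩ := hy i; obtain ⟨h3, h4⟩ := hwmem i
      exact ⟨by simp only [hz]; linarith, by simp only [hz]; linarith⟩
    have hzsum : ∑ i, z i = (k:ℝ) := by
      simp only [hz]
      rw [← Finset.sum_div, Finset.sum_add_distrib, hsum, hwsum]
      ring
    have hFy : -(∑ i, x i * y i) - τ * binEntropy y ≤ -(∑ i, x i * z i) - τ * binEntropy z :=
      h z hzmem hzsum
    have hFw : -(∑ i, x i * w i) - τ * binEntropy w ≤ -(∑ i, x i * z i) - τ * binEntropy z :=
      sigmoid_min x hτ ν w z (fun i => rfl) hzmem (by rw [hzsum, hwsum])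
    -- strict midpoint inequality
    have key2 : ∀ i : Fin n,
        2 * (τ * (z i * Real.log (z i) + (1 - z i) * Real.log (1 - z i)) - x i * z i)
        ≤ (τ * (y i * Real.log (y i) + (1 - y i) * Real.log (1 - y i)) - x i * y i)
          + (τ * (w i * Real.log (w i) + (1 - w i) * Real.log (1 - w i)) - x i * w i) := by
      intro i
      have hmid : z i = (y i + w i)/2 := rfl
      have hD1 := mul_le_mul_of_nonneg_left (Dineq (hzmem i) (hy i)) hτ.le
      have hD2 := mul_le_mul_of_nonneg_left (Dineq (hzmem i) (hwmem i)) hτ.le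
      have hc : τ * ((Real.log (z i) - Real.log (1 - z i)) * (y i - z i))
          + τ * ((Real.log (z i) - Real.log (1 - z i)) * (w i - z i)) = 0 := by
        rw [hmid]; ring
      have hx2 : x i * y i + x i * w i - 2 * (x i * z i) = 0 := by rw [hmid]; ring
      linarith [hD1, hD2, hc, hx2]
    have key2s :
        2 * (τ * (z i0 * Real.log (z i0) + (1 - z i0) * Real.log (1 - z i0)) - x i0 * z i0)
        < (τ * (y i0 * Real.log (y i0) + (1 - y i0) * Real.log (1 - y i0)) - x i0 * y i0)
          + (τ * (w i0 * Real.log (w i0) + (1 - w i0) * Real.log (1 - w i0)) - x i0 * w i0) := by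
      have hmid : z i0 = (y i0 + w i0)/2 := rfl
      have hzney : z i0 ≠ y i0 := by
        rw [hmid]; intro hcon; apply hi0; linarith [hcon]
      have hD1 := mul_lt_mul_of_pos_left (Dineq_strict (hzmem i0) (hy i0) hzney) hτ
      have hD2 := mul_le_mul_of_nonneg_left (Dineq (hzmem i0) (hwmem i0)) hτ.le
      have hc : τ * ((Real.log (z i0) - Real.log (1 - z i0)) * (y i0 - z i0))
          + τ * ((Real.log (z i0) - Real.log (1 - z i0)) * (w i0 - z i0)) = 0 := by
        rw [hmid]; ring
      have hx2 : x i0 * y i0 + x i0 * w i0 - 2 * (x i0 * z i0) = 0 := by rw [hmid]; ring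
      linarith [hD1, hD2, hc, hx2]
    have hstrict :
        ∑ i, (2 * (τ * (z i * Real.log (z i) + (1 - z i) * Real.log (1 - z i)) - x i * z i))
        < ∑ i, ((τ * (y i * Real.log (y i) + (1 - y i) * Real.log (1 - y i)) - x i * y i)
          + (τ * (w i * Real.log (w i) + (1 - w i) * Real.log (1 - w i)) - x i * w i)) := by
      apply Finset.sum_lt_sum (fun i _ => key2 i) ⟨i0, Finset.mem_univ i0, key2s⟩
    rw [Finset.sum_add_distrib] at hstrict
    have e1 := F_eq x τ y
    have e2 := F_eq x τ w
    have e3 := F_eq x τ z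
    have hms : ∑ i, (2 * (τ * (z i * Real.log (z i) + (1 - z i) * Real.log (1 - z i)) - x i * z i))
        = 2 * ∑ i, (τ * (z i * Real.log (z i) + (1 - z i) * Real.log (1 - z i)) - x i * z i) := by
      rw [Finset.mul_sum]
    rw [hms] at hstrict
    linarith
  · -- sigmoid form → minimizer
    rintro ⟨ν, hν⟩ z hz hsz
    exact sigmoid_min x hτ ν y z hν hz (by rw [hsz, hsum])
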